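/- Let A = (a_1,…,a_n) and B = (b_1,…,b_m) be finite sequences of positive integers with m ≤ n. Then the sequence (a_1+b_1, …, a_m+b_m, a_{m+1}, …, a_n) occurs in the overlapping shuffle multiset A·B with multiplicity exactly one, and every member K of A·B satisfies K ≥ (a_1+b_1, …, a_m+b_m, a_{m+1}, …, a_n) in the right lexicographic order. -/

import Mathlib

/-- The overlapping shuffle product of two finite sequences, as a multiset
(counting multiplicities). -/
def osp : List ℕ → List ℕ → Multiset (List ℕ)
  | A, [] => {A}
  | [], B => {B}
  | a :: A, b :: B =>
      ((osp A (b :: B)).map (a :: ·)) +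
      ((osp (a :: A) B).map (b :: ·)) +
      ((osp A B).map ((a + b) :: ·))
termination_by A B => A.length + B.length
decreasing_by all_goals (simp only [List.length_cons]; omega)

/-- The strict right lexicographic order: longer sequences are greater, and
sequences of equal length are compared at the rightmost entry where they
differ. -/
def rlt (I J : List ℕ) : Prop :=
  I.length < J.length ∨ (I.length = J.length ∧ List.Lex (· < ·) I.reverse J.reverse)

lemma lex_append' {s t : List ℕ} : ∀ {u v : List ℕ}, u.length = v.length →
    List.Lex (· < ·) u v → List.Lex (· < ·) (u ++ s) (v ++ t) := by
  intro u v h hlex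
  induction hlex with
  | nil => simp at h
  | cons h' ih => exact List.Lex.cons (ih (by simpa using h))
  | rel hr => exact List.Lex.rel hr

lemma lex_prefix' (p : List ℕ) {x y : ℕ} (u v : List ℕ) (h : x < y) :
    List.Lex (· < ·) (p ++ x :: u) (p ++ y :: v) := by
  induction p with
  | nil => exact List.Lex.rel h
  | cons c p ih => exact List.Lex.cons ih

lemma rlt_trans' {I J K : List ℕ} (h1 : rlt I J) (h2 : rlt J K) : rlt I K := by
  rcases h1 with h1 | ⟨e1, l1⟩ <;> rcases h2 with h2 | ⟨e2, l2⟩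
  · exact Or.inl (h1.trans h2)
  · exact Or.inl (e2 ▸ h1)
  · exact Or.inl (e1 ▸ h2)
  · exact Or.inr ⟨e1.trans e2, List.lt_trans l1 l2⟩

lemma rlt_cons' (c : ℕ) {I J : List ℕ} (h : rlt I J) : rlt (c :: I) (c :: J) := by
  rcases h with h | ⟨e, l⟩
  · exact Or.inl (by simpa using Nat.succ_lt_succ h)
  · exact Or.inr ⟨by simp [e], by simpa using lex_append' (by simp [e]) l⟩

lemma osp_len : ∀ (A B : List ℕ), ∀ K ∈ osp A B, A.length ≤ K.length ∧ B.length ≤ K.length := by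
  intro A B
  induction A, B using osp.induct with
  | case1 A => intro K hK; simp [osp] at hK; simp [hK]
  | case2 B hB =>
    intro K hK
    match B, hB with
    | b :: B, _ => simp [osp] at hK; simp [hK]
  | case3 a A b B ih1 ih2 ih3 =>
    intro K hK
    simp only [osp, Multiset.mem_add, Multiset.mem_map] at hK
    rcases hK with (⟨K', hK', rfl⟩ | ⟨K', hK', rfl⟩) | ⟨K', hK', rfl⟩
    · have := ih1 K' hK'; simp at this ⊢; omega
    · have := ih2 K' hK'; simp at this ⊢; omega
    · have := ih3 K' hK'; simp at this ⊢; omega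

lemma M_extend' (A B : List ℕ) (b : ℕ) (hpos : ∀ x ∈ b :: B, 0 < x)
    (h : B.length < A.length) :
    rlt (List.zipWith (· + ·) A B ++ A.drop B.length)
        (List.zipWith (· + ·) A (b :: B) ++ A.drop (B.length + 1)) := by
  set m := B.length with hm
  set W := List.zipWith (· + ·) A (b :: B) with hW
  have hWlen : W.length = m + 1 := by
    simp [hW, List.length_zipWith]; omega
  have hbm : m < (b :: B).length := by simp [hm]
  have hmW : m < W.length := by omega
  have h3 : W[m]'hmW = A[m]'h + (b :: B)[m]'hbm := List.getElem_zipWith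
  have h1 : W.take m ++ [W[m]'hmW] = W.take (m + 1) := by
    simpa using List.take_concat_get W m hmW
  have h2 : W.take (m + 1) = W := List.take_of_length_le (by omega)
  have hWsplit : W = W.take m ++ [A[m]'h + (b :: B)[m]'hbm] := by
    rw [← h3, h1, h2]
  have hdrop : A.drop m = A[m]'h :: A.drop (m + 1) := List.drop_eq_getElem_cons h
  refine Or.inr ⟨?_, ?_⟩
  · simp [List.length_zipWith, hW]; omega
  · rw [hdrop]
    conv_rhs => rw [hWsplit]
    simp only [List.reverse_append, List.reverse_cons, List.append_assoc,
      List.singleton_append, List.reverse_nil, List.nil_append, List.cons_append]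
    have hc : 0 < (b :: B)[m]'hbm := hpos _ (List.getElem_mem hbm)
    exact lex_prefix' _ _ _ (by omega)

/-- For sequences `A`, `B` of positive integers with `B` no longer than `A`,
the sequence `(a_1+b_1,…,a_m+b_m,a_{m+1},…,a_n)` occurs in the overlapping
shuffle multiset `A·B` with multiplicity exactly one, and every member of
`A·B` is `≥` it in the right lexicographic order. -/
theorem osp_lowest_term (A B : List ℕ) (hA : ∀ a ∈ A, 0 < a) (hB : ∀ b ∈ B, 0 < b)
    (hlen : B.length ≤ A.length) :
    (osp A B).count (List.zipWith (· + ·) A B ++ A.drop B.length) = 1 ∧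
    ∀ K ∈ osp A B,
      List.zipWith (· + ·) A B ++ A.drop B.length = K ∨
      rlt (List.zipWith (· + ·) A B ++ A.drop B.length) K := by
  induction A, B using osp.induct with
  | case1 A =>
    constructor
    · simp [osp]
    · intro K hK
      simp [osp] at hK
      left; simp [hK]
  | case2 B hB' =>
    match B, hB' with
    | b :: B, _ => simp at hlen
  | case3 a A b B ih1 ih2 ih3 =>
    have hbpos : 0 < b := hB b (by simp)
    have hapos : 0 < a := hA a (by simp)
    have hA' : ∀ x ∈ A, 0 < x := fun x hx => hA x (by simp [hx])
    have hB' : ∀ x ∈ B, 0 < x := fun x hx => hB x (by simp [hx])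
    have hlen' : B.length ≤ A.length := by simpa using hlen
    obtain ⟨ihc, ihm⟩ := ih3 hA' hB' hlen'
    set M' := List.zipWith (· + ·) A B ++ A.drop B.length with hM'
    have hMeq : List.zipWith (· + ·) (a :: A) (b :: B) ++ (a :: A).drop (b :: B).length
        = (a + b) :: M' := by simp [hM']
    have hM'len : M'.length = A.length := by
      simp [hM', List.length_zipWith]; omega
    rw [hMeq]
    constructor
    · rw [show osp (a :: A) (b :: B) = ((osp A (b :: B)).map (a :: ·)) +
        ((osp (a :: A) B).map (b :: ·)) + ((osp A B).map ((a + b) :: ·)) from by rw [osp],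
        Multiset.count_add, Multiset.count_add]
      have c1 : Multiset.count ((a + b) :: M') ((osp A (b :: B)).map (a :: ·)) = 0 := by
        rw [Multiset.count_eq_zero]
        intro hmem
        simp only [Multiset.mem_map] at hmem
        obtain ⟨K', _, hK'⟩ := hmem
        have : a = a + b := (List.cons_eq_cons.mp hK').1
        omega
      have c2 : Multiset.count ((a + b) :: M') ((osp (a :: A) B).map (b :: ·)) = 0 := by
        rw [Multiset.count_eq_zero]
        intro hmem
        simp only [Multiset.mem_map] at hmem
        obtain ⟨K', _, hK'⟩ := hmem
        have : b = a + b := (List.cons_eq_cons.mp hK').1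
        omega
      have c3 : Multiset.count ((a + b) :: M') ((osp A B).map ((a + b) :: ·)) = 1 := by
        rw [Multiset.count_map_eq_count' _ _ (fun x y h => by simpa using h)]
        exact ihc
      omega
    · intro K hK
      rw [show osp (a :: A) (b :: B) = ((osp A (b :: B)).map (a :: ·)) +
        ((osp (a :: A) B).map (b :: ·)) + ((osp A B).map ((a + b) :: ·)) from by rw [osp]] at hK
      simp only [Multiset.mem_add, Multiset.mem_map] at hK
      rcases hK with (⟨K', hK', rfl⟩ | ⟨K', hK', rfl⟩) | ⟨K', hK', rfl⟩
      · -- K = a :: K', K' ∈ osp A (b :: B)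
        right
        have hlenK' := osp_len A (b :: B) K' hK'
        rcases Nat.lt_or_ge A.length K'.length with hlt | hge
        · left; simp [List.length_cons, hM'len]; omega
        · have hKlen : K'.length = A.length := le_antisymm hge hlenK'.1
          have hBA : (b :: B).length ≤ A.length := le_trans hlenK'.2 hge
          obtain ⟨_, ihm1⟩ := ih1 hA' hB hBA
          have hext : rlt M' (List.zipWith (· + ·) A (b :: B) ++ A.drop (B.length + 1)) :=
            M_extend' A B b hB (by simpa using hBA)
          have hstep : rlt M' K' := by
            rcases ihm1 K' hK' with heq | hr
            · rw [← heq]; exact hext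
            · exact rlt_trans' hext hr
          rcases hstep with hl | ⟨he, hlex⟩
          · left; simpa using Nat.succ_lt_succ hl
          · right
            refine ⟨by simp [he], ?_⟩
            simpa using lex_append' (s := [a + b]) (t := [a]) (by simp [he]) hlex
      · -- K = b :: K', K' ∈ osp (a :: A) B : longer
        right; left
        have hlenK' := (osp_len (a :: A) B K' hK').1
        simp only [List.length_cons, hM'len] at *
        omega
      · -- K = (a+b) :: K', K' ∈ osp A B
        rcases ihm K' hK' with heq | hr
        · left; rw [heq]
        · right; exact rlt_cons' _ hr
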